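/- Let M be an n×n real matrix with ‖exp(tM)‖ ≤ K e^{−λt} for all t ≥ 0 (for some constants K, λ > 0), let T > 0, c ∈ ℝⁿ, and let h : [0,T] → ℝⁿ be continuous with |h(t)| ≤ K₀ e^{−λ₀(T−t)} for all t ∈ [0,T], for some K₀, λ₀ > 0 with λ₀ ≠ λ. If y : [0,T] → ℝⁿ is differentiable with y′(t) = M y(t) + h(t) for all t ∈ [0,T], then |y(t)| ≤ K e^{−λt}|y(0)| + K′(e^{−λt} + e^{−λ(T−t)} + e^{−λ₀(T−t)}) for all t ∈ [0,T], where K′ > 0 depends only on K, λ, K₀, λ₀ (and not on T); in particular there exist constants K″, μ > 0 independent of T with |y(t)| ≤ K″(|y(0)| + 1)(e^{−μt} + e^{−μ(T−t)}) on [0,T]. -/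

import Mathlib

set_option maxHeartbeats 1000000

open Matrix

/-- Frobenius norm of a real matrix. -/
noncomputable def frobNorm {k l : ℕ} (M : Matrix (Fin k) (Fin l) ℝ) : ℝ :=
  Real.sqrt (∑ i, ∑ j, (M i j) ^ 2)

/-- Euclidean norm of a vector in `ℝⁿ`. -/
noncomputable def eNorm {k : ℕ} (v : Fin k → ℝ) : ℝ :=
  Real.sqrt (∑ i, (v i) ^ 2)

/-- Matrix exponential of a real square matrix. -/
noncomputable def matExp {k : ℕ} (M : Matrix (Fin k) (Fin k) ℝ) : Matrix (Fin k) (Fin k) ℝ :=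
  NormedSpace.exp M

lemma eNorm_nonneg {k : ℕ} (v : Fin k → ℝ) : 0 ≤ eNorm v := Real.sqrt_nonneg _

lemma frobNorm_nonneg {k l : ℕ} (M : Matrix (Fin k) (Fin l) ℝ) : 0 ≤ frobNorm M :=
  Real.sqrt_nonneg _

lemma eNorm_eq_norm {k : ℕ} (v : Fin k → ℝ) :
    eNorm v = ‖(PiLp.continuousLinearEquiv 2 ℝ (fun _ : Fin k => ℝ)).symm v‖ := by
  rw [EuclideanSpace.norm_eq]
  unfold eNorm
  congr 1
  refine Finset.sum_congr rfl fun i _ => ?_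
  rw [Real.norm_eq_abs, sq_abs]
  rfl

lemma eNorm_mulVec_le {k : ℕ} (A : Matrix (Fin k) (Fin k) ℝ) (v : Fin k → ℝ) :
    eNorm (A.mulVec v) ≤ frobNorm A * eNorm v := by
  unfold eNorm frobNorm
  rw [← Real.sqrt_mul (by positivity)]
  apply Real.sqrt_le_sqrt
  rw [Finset.sum_mul]
  refine Finset.sum_le_sum fun i _ => ?_
  calc (A.mulVec v i) ^ 2 = (∑ j, A i j * v j) ^ 2 := by
        simp [Matrix.mulVec, dotProduct]
    _ ≤ (∑ j, (A i j) ^ 2) * ∑ j, (v j) ^ 2 :=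
        Finset.sum_mul_sq_le_sq_mul_sq Finset.univ _ _

lemma key_estimate {n : ℕ} (K lam K₀ lam₀ : ℝ) (hK : 0 < K) (hlam : 0 < lam)
    (hK₀ : 0 < K₀) (hlam₀ : 0 < lam₀) (T : ℝ)
    (M : Matrix (Fin n) (Fin n) ℝ)
    (hM : ∀ t : ℝ, 0 ≤ t → frobNorm (matExp (t • M)) ≤ K * Real.exp (-lam * t))
    (h y : ℝ → Fin n → ℝ)
    (hcont : ContinuousOn h (Set.Icc 0 T))
    (hh : ∀ t ∈ Set.Icc (0:ℝ) T, eNorm (h t) ≤ K₀ * Real.exp (-lam₀ * (T - t)))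
    (hy : ∀ t ∈ Set.Icc (0:ℝ) T, HasDerivAt y (M.mulVec (y t) + h t) t)
    (t : ℝ) (ht : t ∈ Set.Icc (0:ℝ) T) :
    eNorm (y t) ≤ K * Real.exp (-lam * t) * eNorm (y 0)
      + (K * K₀ / (lam + lam₀)) * Real.exp (-lam₀ * (T - t)) := by
  letI : SeminormedRing (Matrix (Fin n) (Fin n) ℝ) := Matrix.linftyOpSemiNormedRing
  letI : NormedRing (Matrix (Fin n) (Fin n) ℝ) := Matrix.linftyOpNormedRing
  letI : NormedAlgebra ℝ (Matrix (Fin n) (Fin n) ℝ) := Matrix.linftyOpNormedAlgebra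
  obtain ⟨ht0, htT⟩ := ht
  set a : ℝ := lam + lam₀ with ha
  have ha0 : 0 < a := by positivity
  set C : ℝ := K * K₀ * Real.exp (-(lam * t + lam₀ * T)) with hC
  set E : ℝ → Matrix (Fin n) (Fin n) ℝ := fun u => NormedSpace.exp ((t - u) • M) with hE
  set f : ℝ → Fin n → ℝ := fun u => (E u).mulVec (h u) with hf
  set w : ℝ → Fin n → ℝ := fun u => (E u).mulVec (y u) with hw
  -- derivative of E
  have hEderiv : ∀ u : ℝ, HasDerivAt E (-(M * E u)) u := by
    intro u
    have h1 : HasDerivAt (fun s : ℝ => NormedSpace.exp (s • M))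
        (M * NormedSpace.exp ((t - u) • M)) (t - u) :=
      hasDerivAt_exp_smul_const' M (t - u)
    have h2 : HasDerivAt (fun u : ℝ => t - u) (-1) u := (hasDerivAt_id u).const_sub t
    have := h1.scomp u h2
    rw [neg_one_smul] at this
    exact this
  -- entry continuous linear map
  have : FiniteDimensional ℝ (Matrix (Fin n) (Fin n) ℝ) := by infer_instance
  let L : Fin n → Fin n → Matrix (Fin n) (Fin n) ℝ →L[ℝ] ℝ := fun i j =>
    LinearMap.toContinuousLinearMap
      { toFun := fun A => A i j
        map_add' := fun _ _ => rfl
        map_smul' := fun _ _ => rfl }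
  have hLapp : ∀ i j A, L i j A = A i j := fun i j A => rfl
  have hEij : ∀ (i j : Fin n) (u : ℝ),
      HasDerivAt (fun u => E u i j) ((-(M * E u)) i j) u := by
    intro i j u
    have := ((L i j).hasFDerivAt.comp_hasDerivAt u (hEderiv u))
    exact this
  -- commute
  have hcomm : ∀ u : ℝ, E u * M = M * E u := by
    intro u
    have : Commute ((t - u) • M) M := (Commute.refl M).smul_left (t - u)
    exact (this.exp_left)
  -- derivative of w
  have hwderiv : ∀ u ∈ Set.Icc (0:ℝ) t, HasDerivAt w (f u) u := by
    intro u hu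
    have huT : u ∈ Set.Icc (0:ℝ) T := ⟨hu.1, hu.2.trans htT⟩
    have hyu := hy u huT
    have hyu' := hasDerivAt_pi.1 hyu
    have hcomp : ∀ i : Fin n, HasDerivAt (fun u => w u i)
        (((-(M * E u)).mulVec (y u) + (E u).mulVec (M.mulVec (y u) + h u)) i) u := by
      intro i
      have : HasDerivAt (fun u => ∑ j, E u i j * y u j)
          (∑ j, ((-(M * E u)) i j * y u j + E u i j * (M.mulVec (y u) + h u) j)) u :=
        HasDerivAt.fun_sum fun j _ => (hEij i j u).mul (hyu' j)
      have heq : (fun u => ∑ j, E u i j * y u j) = fun u => w u i := by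
        funext u; simp [hw, Matrix.mulVec, dotProduct]
      rw [heq] at this
      convert this using 1
      simp [Matrix.mulVec, dotProduct, Finset.sum_add_distrib]
    have := hasDerivAt_pi.2 hcomp
    have hsimp : (-(M * E u)).mulVec (y u) + (E u).mulVec (M.mulVec (y u) + h u) = f u := by
      rw [Matrix.mulVec_add, Matrix.mulVec_mulVec, ← hcomm u, ← Matrix.mulVec_mulVec,
        Matrix.neg_mulVec, Matrix.mulVec_mulVec]
      simp [hf]
    rwa [hsimp] at this
  -- continuity of f
  have hEcont : Continuous E := by
    have : Continuous fun u : ℝ => (t - u) • M :=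
      (continuous_const.sub continuous_id).smul continuous_const
    exact continuous_iff_continuousAt.2 fun u => (hEderiv u).continuousAt
  have hfcont : ContinuousOn f (Set.Icc 0 t) := by
    rw [continuousOn_pi]
    intro i
    have : ∀ u, f u i = ∑ j, (L i j) (E u) * h u j := by
      intro u; simp [hf, Matrix.mulVec, dotProduct, hLapp]
    simp only [this]
    apply continuousOn_finset_sum
    intro j _
    exact (((L i j).continuous.comp hEcont).continuousOn).mul
      ((continuous_apply j).comp_continuousOn
        (hcont.mono (Set.Icc_subset_Icc le_rfl htT)))
  have hfint : IntervalIntegrable f MeasureTheory.volume 0 t := by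
    apply ContinuousOn.intervalIntegrable
    rwa [Set.uIcc_of_le ht0]
  -- FTC
  have hftc : ∫ u in (0:ℝ)..t, f u = w t - w 0 := by
    apply intervalIntegral.integral_eq_sub_of_hasDerivAt
    · intro u hu
      rw [Set.uIcc_of_le ht0] at hu
      exact hwderiv u hu
    · exact hfint
  have hwt : w t = y t := by
    simp [hw, hE, sub_self, zero_smul, NormedSpace.exp_zero, Matrix.one_mulVec]
  have hw0 : w 0 = (matExp (t • M)).mulVec (y 0) := by
    simp [hw, hE, matExp]
  have hyt : y t = w 0 + ∫ u in (0:ℝ)..t, f u := by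
    rw [hftc, hwt]; abel
  -- norm inequality on integral
  set Lp := (PiLp.continuousLinearEquiv 2 ℝ (fun _ : Fin n => ℝ)).symm with hLp
  set g : ℝ → ℝ := fun u => C * Real.exp (a * u) with hg
  have hbound : ∀ u ∈ Set.Icc (0:ℝ) t, eNorm (f u) ≤ g u := by
    intro u hu
    have h1 : frobNorm (E u) ≤ K * Real.exp (-lam * (t - u)) := by
      have := hM (t - u) (by linarith [hu.2])
      rwa [show matExp ((t - u) • M) = E u from rfl] at this
    have h2 : eNorm (h u) ≤ K₀ * Real.exp (-lam₀ * (T - u)) :=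
      hh u ⟨hu.1, hu.2.trans htT⟩
    calc eNorm (f u) ≤ frobNorm (E u) * eNorm (h u) := eNorm_mulVec_le _ _
      _ ≤ (K * Real.exp (-lam * (t - u))) * (K₀ * Real.exp (-lam₀ * (T - u))) := by
          apply mul_le_mul h1 h2 (eNorm_nonneg _)
          positivity
      _ = g u := by
          show _ = C * Real.exp (a * u)
          have hexp : -lam * (t - u) + -lam₀ * (T - u) = -(lam * t + lam₀ * T) + a * u := by
            rw [ha]; ring
          rw [mul_mul_mul_comm, ← Real.exp_add, hexp, Real.exp_add, hC]
          ring
  have hgint : IntervalIntegrable g MeasureTheory.volume 0 t :=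
    (Continuous.intervalIntegrable (continuous_const.mul (Real.continuous_exp.comp (continuous_const.mul continuous_id))) 0 t)
  have hnormint : ‖∫ u in (0:ℝ)..t, Lp.toContinuousLinearMap (f u)‖
      ≤ |∫ u in (0:ℝ)..t, g u| := by
    apply (intervalIntegral.norm_integral_le_of_norm_le ht0 _ hgint).trans (le_abs_self _)
    · filter_upwards with u hu
      have := hbound u ⟨le_of_lt hu.1, hu.2⟩
      rwa [eNorm_eq_norm] at this
  -- compute the integral of g
  have hgcalc : ∫ u in (0:ℝ)..t, g u = C / a * Real.exp (a * t) - C / a := by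
    have : ∀ u ∈ Set.uIcc (0:ℝ) t, HasDerivAt (fun u => C / a * Real.exp (a * u)) (g u) u := by
      intro u _
      have h1 : HasDerivAt (fun u : ℝ => a * u) a u := by
        simpa using (hasDerivAt_id u).const_mul a
      have h2 := (Real.hasDerivAt_exp (a * u)).comp u h1
      have h3 := h2.const_mul (C / a)
      have hgu : g u = C / a * (Real.exp (a * u) * a) := by
        show C * Real.exp (a * u) = C / a * (Real.exp (a * u) * a)
        rw [mul_comm (Real.exp (a * u)) a, ← mul_assoc, div_mul_cancel₀ C ha0.ne']
      rw [hgu]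
      exact h3
    rw [intervalIntegral.integral_eq_sub_of_hasDerivAt this
      (Continuous.intervalIntegrable (continuous_const.mul (Real.continuous_exp.comp (continuous_const.mul continuous_id))) 0 t)]
    simp
  have hCpos : 0 < C := by positivity
  have hintle : |∫ u in (0:ℝ)..t, g u| ≤ (K * K₀ / a) * Real.exp (-lam₀ * (T - t)) := by
    rw [hgcalc, abs_of_nonneg]
    · have : C / a * Real.exp (a * t) = (K * K₀ / a) * Real.exp (-lam₀ * (T - t)) := by
        rw [hC, ha, div_mul_eq_mul_div, div_mul_eq_mul_div, mul_assoc, ← Real.exp_add]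
        ring_nf
      rw [← this]
      have : 0 < C / a := by positivity
      linarith
    · have h1 : (1:ℝ) ≤ Real.exp (a * t) := by
        rw [← Real.exp_zero]
        exact Real.exp_le_exp.2 (by nlinarith)
      have : 0 < C / a := by positivity
      nlinarith
  -- combine
  have hstep : eNorm (y t) ≤ eNorm (w 0) + |∫ u in (0:ℝ)..t, g u| := by
    rw [hyt, eNorm_eq_norm]
    have hmap : Lp (w 0 + ∫ u in (0:ℝ)..t, f u)
        = Lp (w 0) + ∫ u in (0:ℝ)..t, Lp.toContinuousLinearMap (f u) := by
      rw [map_add]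
      congr 1
      exact (ContinuousLinearMap.intervalIntegral_comp_comm Lp.toContinuousLinearMap hfint).symm
    rw [show Lp (w 0 + ∫ u in (0:ℝ)..t, f u)
        = (PiLp.continuousLinearEquiv 2 ℝ (fun _ : Fin n => ℝ)).symm
            (w 0 + ∫ u in (0:ℝ)..t, f u) from rfl] at hmap
    rw [hmap]
    refine (norm_add_le _ _).trans ?_
    rw [← eNorm_eq_norm]
    exact add_le_add le_rfl hnormint
  have hw0le : eNorm (w 0) ≤ K * Real.exp (-lam * t) * eNorm (y 0) := by
    rw [hw0]
    refine (eNorm_mulVec_le _ _).trans ?_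
    exact mul_le_mul_of_nonneg_right (hM t ht0) (eNorm_nonneg _)
  calc eNorm (y t) ≤ eNorm (w 0) + |∫ u in (0:ℝ)..t, g u| := hstep
    _ ≤ K * Real.exp (-lam * t) * eNorm (y 0) + (K * K₀ / a) * Real.exp (-lam₀ * (T - t)) :=
        add_le_add hw0le hintle

/-- forward linear ODE estimate.  If `‖exp(tM)‖ ≤ K e^{-λt}` for `t ≥ 0`
and `y' = M y + h` on `[0, T]` with `|h(t)| ≤ K₀ e^{-λ₀(T-t)}`, then
`|y(t)| ≤ K e^{-λt}|y(0)| + K'(e^{-λt} + e^{-λ(T-t)} + e^{-λ₀(T-t)})` with `K'`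
independent of `T`; in particular
`|y(t)| ≤ K''(|y(0)| + 1)(e^{-μt} + e^{-μ(T-t)})` with `K'', μ` independent of `T`. -/
theorem forward_ode_turnpike_estimate {n : ℕ} (hn : 0 < n)
    (K lam K₀ lam₀ : ℝ)
    (hK : 0 < K) (hlam : 0 < lam) (hK₀ : 0 < K₀) (hlam₀ : 0 < lam₀)
    (hne : lam₀ ≠ lam) :
    ∃ K' > (0:ℝ), ∃ K'' > (0:ℝ), ∃ μ > (0:ℝ), ∀ T : ℝ, 0 < T →
      ∀ M : Matrix (Fin n) (Fin n) ℝ,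
      (∀ t : ℝ, 0 ≤ t → frobNorm (matExp (t • M)) ≤ K * Real.exp (-lam * t)) →
      ∀ c : Fin n → ℝ, ∀ h y : ℝ → Fin n → ℝ,
        ContinuousOn h (Set.Icc 0 T) →
        (∀ t ∈ Set.Icc (0:ℝ) T, eNorm (h t) ≤ K₀ * Real.exp (-lam₀ * (T - t))) →
        (∀ t ∈ Set.Icc (0:ℝ) T, HasDerivAt y (M.mulVec (y t) + h t) t) →
        ∀ t ∈ Set.Icc (0:ℝ) T,
          eNorm (y t) ≤ K * Real.exp (-lam * t) * eNorm (y 0)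
              + K' * (Real.exp (-lam * t) + Real.exp (-lam * (T - t))
                + Real.exp (-lam₀ * (T - t)))
          ∧ eNorm (y t) ≤ K'' * (eNorm (y 0) + 1)
              * (Real.exp (-μ * t) + Real.exp (-μ * (T - t))) := by
  refine ⟨K * K₀ / (lam + lam₀), by positivity, K + K * K₀ / (lam + lam₀), by positivity,
    min lam lam₀, lt_min hlam hlam₀, ?_⟩
  intro T hT M hM c h y hcont hh hy t ht
  have hkey := key_estimate K lam K₀ lam₀ hK hlam hK₀ hlam₀ T M hM h y hcont hh hy t ht
  obtain ⟨ht0, htT⟩ := ht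
  set K' : ℝ := K * K₀ / (lam + lam₀) with hK'
  have hK'pos : 0 < K' := by positivity
  set μ : ℝ := min lam lam₀ with hμ
  have hμpos : 0 < μ := lt_min hlam hlam₀
  set N : ℝ := eNorm (y 0) with hN
  have hNpos : 0 ≤ N := eNorm_nonneg _
  have e1pos : 0 < Real.exp (-lam * t) := Real.exp_pos _
  have e2pos : 0 < Real.exp (-lam * (T - t)) := Real.exp_pos _
  have e3pos : 0 < Real.exp (-lam₀ * (T - t)) := Real.exp_pos _
  constructor
  · nlinarith [mul_pos hK'pos e1pos, mul_pos hK'pos e2pos]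
  · have hμt : Real.exp (-lam * t) ≤ Real.exp (-μ * t) := by
      apply Real.exp_le_exp.2
      have : μ ≤ lam := min_le_left _ _
      nlinarith
    have hμTt : Real.exp (-lam₀ * (T - t)) ≤ Real.exp (-μ * (T - t)) := by
      apply Real.exp_le_exp.2
      have h1 : μ ≤ lam₀ := min_le_right _ _
      nlinarith
    have e4pos : 0 < Real.exp (-μ * t) := Real.exp_pos _
    have e5pos : 0 < Real.exp (-μ * (T - t)) := Real.exp_pos _
    have step1 : K * Real.exp (-lam * t) * N ≤ K * Real.exp (-μ * t) * N :=
      mul_le_mul_of_nonneg_right (mul_le_mul_of_nonneg_left hμt (le_of_lt hK)) hNpos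
    have step2 : K' * Real.exp (-lam₀ * (T - t)) ≤ K' * Real.exp (-μ * (T - t)) :=
      mul_le_mul_of_nonneg_left hμTt (le_of_lt hK'pos)
    have hA : (0:ℝ) ≤ K + K' * N + K' := by nlinarith
    have hB : (0:ℝ) ≤ K * N + K + K' * N := by nlinarith
    nlinarith [mul_nonneg hA (le_of_lt e4pos), mul_nonneg hB (le_of_lt e5pos)]
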